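/- Let f : ℝ → [0,∞) be a probability density that is symmetric (f(−y) = f(y)), continuous at 0, non-increasing on [0, ∞) (hence non-decreasing on (−∞, 0]), and suppose there exist h₁, C, C' > 0 and an integer m > 2 such that f(y) ≥ C exp(−C' y^m) for all y ≥ h₁. Then there exist constants D, D' > 0 such that for all h ≥ 0: ∫_ℝ min( f(y), f(y − h) ) dy ≥ exp( −D (h + h^{D'}) ). -/

import Mathlib

open MeasureTheory Set

/-- Condition A3 for conditionally homoscedastic autoregressions: for a
symmetric unimodal density with a stretched-exponential lower bound on its
tail, the overlap `∫ min(f(y), f(y-h)) dy` is at least `exp(-D(h + h^{D'}))`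
for all `h ≥ 0`. -/
theorem homoscedastic_A3 (f : ℝ → ℝ) (hf_meas : Measurable f)
    (hf_nonneg : ∀ u, 0 ≤ f u) (hf_int : Integrable f)
    (hf_one : (∫ u, f u) = 1)
    (hf_symm : ∀ y, f (-y) = f y) (hf_cont : ContinuousAt f 0)
    (hf_anti : AntitoneOn f (Set.Ici 0))
    (h₁ C C' : ℝ) (hh₁ : 0 < h₁) (hC : 0 < C) (hC' : 0 < C')
    (m : ℕ) (hm : 2 < m)
    (hlb : ∀ y : ℝ, h₁ ≤ y → C * Real.exp (-(C' * y ^ m)) ≤ f y) :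
    ∃ D D' : ℝ, 0 < D ∧ 0 < D' ∧ ∀ h : ℝ, 0 ≤ h →
      Real.exp (-(D * (h + h ^ D'))) ≤ ∫ y, min (f y) (f (y - h)) := by
  -- basic facts about f
  have fabs : ∀ u, f u = f |u| := by
    intro u
    rcases le_or_gt 0 u with h | h
    · rw [abs_of_nonneg h]
    · rw [abs_of_neg h]; exact (hf_symm u).symm
  have fle0 : ∀ u, f u ≤ f 0 := by
    intro u
    rw [fabs u]
    exact hf_anti Set.self_mem_Ici (Set.mem_Ici.mpr (abs_nonneg u)) (abs_nonneg u)
  -- integrability of the overlap integrand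
  have hg_meas : ∀ h : ℝ, Measurable (fun y => min (f y) (f (y - h))) := fun h =>
    hf_meas.min (hf_meas.comp (measurable_id.sub_const h))
  have hg_nonneg : ∀ (h : ℝ) (y : ℝ), 0 ≤ min (f y) (f (y - h)) := fun h y =>
    le_min (hf_nonneg y) (hf_nonneg _)
  have hg_int : ∀ h : ℝ, Integrable (fun y => min (f y) (f (y - h))) := by
    intro h
    refine hf_int.mono ((hg_meas h).aestronglyMeasurable)
      (Filter.Eventually.of_forall fun y => ?_)
    rw [Real.norm_eq_abs, Real.norm_eq_abs, abs_of_nonneg (hg_nonneg h y),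
      abs_of_nonneg (hf_nonneg y)]
    exact min_le_left _ _
  -- Lower bound 1 : tail bound, good for large h
  have bound1 : ∀ h : ℝ, 0 ≤ h →
      C * Real.exp (-(C' * (max (h/2) h₁ + 1) ^ m)) ≤ ∫ y, min (f y) (f (y - h)) := by
    intro h hh
    have ha0 : 0 < max (h/2) h₁ := lt_of_lt_of_le hh₁ (le_max_right _ _)
    have hah : h/2 ≤ max (h/2) h₁ := le_max_left _ _
    have hha₁ : h₁ ≤ max (h/2) h₁ := le_max_right _ _
    have key : ∀ y ∈ Icc (max (h/2) h₁) (max (h/2) h₁ + 1),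
        C * Real.exp (-(C' * (max (h/2) h₁ + 1) ^ m)) ≤ min (f y) (f (y - h)) := by
      intro y hy
      have hy1 := hy.1
      have hy2 := hy.2
      have hy0 : 0 ≤ y := le_trans ha0.le hy.1
      have h1 : C * Real.exp (-(C' * (max (h/2) h₁ + 1) ^ m)) ≤ f (max (h/2) h₁ + 1) :=
        hlb _ (by linarith)
      refine le_min (le_trans h1 ?_) (le_trans h1 ?_)
      · exact hf_anti (Set.mem_Ici.mpr hy0) (Set.mem_Ici.mpr (by linarith)) hy.2
      · rw [fabs (y - h)]
        refine hf_anti (Set.mem_Ici.mpr (abs_nonneg _)) (Set.mem_Ici.mpr (by linarith)) ?_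
        rw [abs_le]
        constructor
        · have : h/2 ≤ y := le_trans hah hy.1
          linarith
        · linarith
    have hne : volume (Icc (max (h/2) h₁) (max (h/2) h₁ + 1)) ≠ ⊤ := by
      rw [Real.volume_Icc]; exact ENNReal.ofReal_ne_top
    have hvol : (volume (Icc (max (h/2) h₁) (max (h/2) h₁ + 1))).toReal = 1 := by
      rw [Real.volume_Icc, show max (h/2) h₁ + 1 - max (h/2) h₁ = (1:ℝ) by ring,
        ENNReal.ofReal_one, ENNReal.toReal_one]
    calc C * Real.exp (-(C' * (max (h/2) h₁ + 1) ^ m))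
        = C * Real.exp (-(C' * (max (h/2) h₁ + 1) ^ m)) *
            (volume (Icc (max (h/2) h₁) (max (h/2) h₁ + 1))).toReal := by rw [hvol, mul_one]
      _ ≤ ∫ y in Icc (max (h/2) h₁) (max (h/2) h₁ + 1), min (f y) (f (y - h)) :=
          setIntegral_ge_of_const_le_real measurableSet_Icc hne key ((hg_int h).integrableOn)
      _ ≤ ∫ y, min (f y) (f (y - h)) :=
          setIntegral_le_integral (hg_int h) (Filter.Eventually.of_forall (hg_nonneg h))
  -- Lower bound 2 : overlap close to 1 for small h
  have bound2 : ∀ h : ℝ, 0 ≤ h →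
      1 - f 0 * h ≤ ∫ y, min (f y) (f (y - h)) := by
    intro h hh
    have hint2 : Integrable (fun y => f (y - h)) := hf_int.comp_sub_right h
    have hptw : ∀ y, (Ici (h/2)).indicator f y
        + (Iio (h/2)).indicator (fun y => f (y - h)) y ≤ min (f y) (f (y - h)) := by
      intro y
      by_cases hy : h/2 ≤ y
      · rw [Set.indicator_of_mem (Set.mem_Ici.mpr hy),
          Set.indicator_of_notMem (by simpa using hy), add_zero]
        refine le_min le_rfl ?_
        rw [fabs (y - h)]
        exact hf_anti (Set.mem_Ici.mpr (abs_nonneg _)) (Set.mem_Ici.mpr (by linarith))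
          (abs_le.mpr ⟨by linarith, by linarith⟩)
      · push_neg at hy
        rw [Set.indicator_of_notMem (by simpa using hy.not_ge),
          Set.indicator_of_mem (Set.mem_Iio.mpr hy), zero_add]
        refine le_min ?_ le_rfl
        rw [fabs (y - h), fabs y]
        refine hf_anti (Set.mem_Ici.mpr (abs_nonneg _)) (Set.mem_Ici.mpr (abs_nonneg _)) ?_
        rcases le_or_gt 0 y with h0 | h0
        · rw [abs_of_nonneg h0, abs_of_nonpos (by linarith)]; linarith
        · rw [abs_of_neg h0, abs_of_nonpos (by linarith)]; linarith
    have hI1 : Integrable ((Ici (h/2)).indicator f) := hf_int.indicator measurableSet_Ici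
    have hI2 : Integrable ((Iio (h/2)).indicator fun y => f (y - h)) :=
      hint2.indicator measurableSet_Iio
    have hle : (∫ y in Ici (h/2), f y) + (∫ y in Iio (h/2), f (y - h))
        ≤ ∫ y, min (f y) (f (y - h)) := by
      have := integral_mono (hI1.add hI2) (hg_int h) hptw
      simp only [Pi.add_apply] at this
      rwa [integral_add hI1 hI2, integral_indicator measurableSet_Ici,
        integral_indicator measurableSet_Iio] at this
    have htrans : (∫ y in Iio (h/2), f (y - h)) = ∫ y in Iio (-(h/2)), f y := by
      have hind : (fun y => (Iio (h/2)).indicator (fun y => f (y - h)) y)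
          = fun y => (Iio (h/2 - h)).indicator f (y - h) := by
        funext y
        by_cases hy : y < h/2
        · rw [Set.indicator_of_mem (Set.mem_Iio.mpr hy),
            Set.indicator_of_mem (Set.mem_Iio.mpr (by linarith))]
        · rw [Set.indicator_of_notMem (by simpa using hy),
            Set.indicator_of_notMem (by simp only [Set.mem_Iio, not_lt] at hy ⊢; linarith)]
      calc (∫ y in Iio (h/2), f (y - h))
          = ∫ y, (Iio (h/2)).indicator (fun y => f (y - h)) y :=
            (integral_indicator measurableSet_Iio).symm
        _ = ∫ y, (Iio (h/2 - h)).indicator f (y - h) := by rw [hind]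
        _ = ∫ y, (Iio (h/2 - h)).indicator f y :=
            integral_sub_right_eq_self ((Iio (h/2 - h)).indicator f) h
        _ = ∫ y in Iio (-(h/2)), f y := by
            rw [show h/2 - h = -(h/2) by ring, integral_indicator measurableSet_Iio]
    have hd1 : (∫ y in Iio (-(h/2)), f y) + (∫ y in Ici (-(h/2)), f y) = 1 := by
      have := setIntegral_union (f := f) (μ := volume)
        (Iio_disjoint_Ici (le_refl (-(h/2)))) measurableSet_Ici
        hf_int.integrableOn hf_int.integrableOn
      rw [Set.Iio_union_Ici, setIntegral_univ, hf_one] at this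
      linarith
    have hd2 : (∫ y in Ici (-(h/2)), f y)
        = (∫ y in Ico (-(h/2)) (h/2), f y) + ∫ y in Ici (h/2), f y := by
      have hdisj : Disjoint (Ico (-(h/2)) (h/2)) (Ici (h/2)) :=
        Set.disjoint_left.mpr fun x hx hx' => absurd hx.2 (not_lt.mpr hx')
      have := setIntegral_union (f := f) (μ := volume) hdisj measurableSet_Ici
        hf_int.integrableOn hf_int.integrableOn
      rwa [Set.Ico_union_Ici_eq_Ici (by linarith : -(h/2) ≤ h/2)] at this
    have hmid : (∫ y in Ico (-(h/2)) (h/2), f y) ≤ f 0 * h := by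
      have hfin : volume (Ico (-(h/2)) (h/2)) < ⊤ := by
        rw [Real.volume_Ico]; exact ENNReal.ofReal_lt_top
      have hmono : (∫ y in Ico (-(h/2)) (h/2), f y)
          ≤ ∫ _y in Ico (-(h/2)) (h/2), f 0 :=
        setIntegral_mono_on hf_int.integrableOn
          (integrableOn_const hfin.ne) measurableSet_Ico (fun x _ => fle0 x)
      rw [setIntegral_const, Real.volume_real_Ico, show h/2 - -(h/2) = h by ring,
        max_eq_left hh, smul_eq_mul, mul_comm] at hmono
      exact hmono
    linarith [hle, htrans, hd1, hd2, hmid]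
  -- choose the constants
  have hf00 : (0:ℝ) ≤ f 0 := hf_nonneg 0
  obtain ⟨h₀, hh₀, hf0h₀⟩ : ∃ h₀ : ℝ, 0 < h₀ ∧ f 0 * h₀ ≤ 1/2 := by
    refine ⟨1 / (2 * (f 0 + 1)), div_pos one_pos (by linarith), ?_⟩
    rw [mul_one_div, div_le_div_iff₀ (by linarith) (by norm_num)]
    linarith
  obtain ⟨B, hB, hBprop⟩ : ∃ B : ℝ, 0 < B ∧
      ∀ h : ℝ, h₀ ≤ h → max (h/2) h₁ + 1 ≤ B * h := by
    have hq : 0 < (h₁ + 1) / h₀ := div_pos (by linarith) hh₀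
    refine ⟨1/2 + (h₁ + 1) / h₀, by linarith, fun h hh => ?_⟩
    have hh0 : 0 ≤ h := le_trans hh₀.le hh
    have h1 : h₁ + 1 ≤ ((h₁ + 1) / h₀) * h := by
      rw [div_mul_eq_mul_div, le_div_iff₀ hh₀]
      nlinarith
    have h2 : max (h/2) h₁ ≤ h/2 + h₁ := max_le (by linarith) (by linarith)
    calc max (h/2) h₁ + 1 ≤ h/2 + (h₁ + 1) := by linarith
      _ ≤ h/2 + ((h₁ + 1) / h₀) * h := by linarith
      _ = (1/2 + (h₁ + 1) / h₀) * h := by ring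
  obtain ⟨D, hD_pos, hD1, hD2, hD3⟩ : ∃ D : ℝ, 0 < D ∧ 2 * f 0 + 1 ≤ D ∧
      C' * B ^ m ≤ D ∧ |Real.log C| ≤ D * h₀ := by
    have hcb : 0 < C' * B ^ m := mul_pos hC' (pow_pos hB m)
    have hlg : 0 ≤ |Real.log C| / h₀ := div_nonneg (abs_nonneg _) hh₀.le
    have hcanc : |Real.log C| / h₀ * h₀ = |Real.log C| := div_mul_cancel₀ _ hh₀.ne'
    refine ⟨2 * f 0 + 1 + C' * B ^ m + |Real.log C| / h₀, by linarith, by linarith,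
      by linarith, ?_⟩
    nlinarith [mul_nonneg (by linarith : (0:ℝ) ≤ 2 * f 0 + 1 + C' * B ^ m) hh₀.le]
  refine ⟨D, (m : ℝ), hD_pos, by exact_mod_cast Nat.cast_pos.mpr (by omega), ?_⟩
  intro h hh
  rw [Real.rpow_natCast]
  rcases le_or_gt h h₀ with hcase | hcase
  · -- small h : use bound2
    refine le_trans ?_ (bound2 h hh)
    have e1 : Real.exp (-(D * (h + h ^ m))) ≤ Real.exp (-(D * h)) := by
      apply Real.exp_le_exp.mpr
      nlinarith [pow_nonneg hh m, hD_pos.le]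
    refine le_trans e1 ?_
    have hexp : 1 + D * h ≤ Real.exp (D * h) := by linarith [Real.add_one_le_exp (D * h)]
    have hf0h : f 0 * h ≤ 1/2 :=
      le_trans (mul_le_mul_of_nonneg_left hcase hf00) hf0h₀
    have hDf0h : f 0 + f 0 * (D * h) ≤ D := by
      have s1 : f 0 * (D * h) = D * (f 0 * h) := by ring
      have s2 : D * (f 0 * h) ≤ D * (1/2) := mul_le_mul_of_nonneg_left hf0h hD_pos.le
      nlinarith
    have hpos : 0 < 1 - f 0 * h := by linarith
    have key : 1 ≤ (1 - f 0 * h) * Real.exp (D * h) := by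
      have h2 : (1 - f 0 * h) * (1 + D * h) ≤ (1 - f 0 * h) * Real.exp (D * h) :=
        mul_le_mul_of_nonneg_left hexp hpos.le
      nlinarith [mul_nonneg hh (by linarith : (0:ℝ) ≤ D - f 0 - f 0 * (D * h))]
    have hE : (0:ℝ) < Real.exp (D * h) := Real.exp_pos _
    have hfin : (Real.exp (D * h))⁻¹ * ((1 - f 0 * h) * Real.exp (D * h)) = 1 - f 0 * h := by
      field_simp
    calc Real.exp (-(D * h)) = (Real.exp (D * h))⁻¹ := by rw [Real.exp_neg]
      _ = (Real.exp (D * h))⁻¹ * 1 := (mul_one _).symm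
      _ ≤ (Real.exp (D * h))⁻¹ * ((1 - f 0 * h) * Real.exp (D * h)) :=
          mul_le_mul_of_nonneg_left key (inv_nonneg.mpr hE.le)
      _ = 1 - f 0 * h := hfin
  · -- large h : use bound1
    refine le_trans ?_ (bound1 h hh)
    have haB : max (h/2) h₁ + 1 ≤ B * h := hBprop h hcase.le
    have hb0 : (0:ℝ) ≤ max (h/2) h₁ + 1 :=
      add_nonneg (le_trans hh₁.le (le_max_right _ _)) zero_le_one
    have hpow : (max (h/2) h₁ + 1) ^ m ≤ (B * h) ^ m := pow_le_pow_left₀ hb0 haB m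
    rw [show C = Real.exp (Real.log C) from (Real.exp_log hC).symm, ← Real.exp_add]
    apply Real.exp_le_exp.mpr
    have e1 : C' * (max (h/2) h₁ + 1) ^ m ≤ C' * B ^ m * h ^ m := by
      calc C' * (max (h/2) h₁ + 1) ^ m ≤ C' * (B * h) ^ m :=
            mul_le_mul_of_nonneg_left hpow hC'.le
        _ = C' * B ^ m * h ^ m := by rw [mul_pow]; ring
    have e2 : |Real.log C| ≤ D * h :=
      le_trans hD3 (mul_le_mul_of_nonneg_left hcase.le hD_pos.le)
    have e3 : C' * B ^ m * h ^ m ≤ D * h ^ m :=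
      mul_le_mul_of_nonneg_right hD2 (pow_nonneg hh m)
    have e4 : -Real.log C ≤ |Real.log C| := neg_le_abs _
    have e5 : D * (h + h ^ m) = D * h + D * h ^ m := by ring
    linarith
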